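/- (Tanny's representation) For all integers n ≥ 1 and 0 ≤ k ≤ n-1, the Eulerian number E(n,k) satisfies E(n,k)/n! = P(⌊U₁ + U₂ + ... + U_n⌋ = k), where U₁,...,U_n are i.i.d. uniform random variables on [0,1]. -/

import Mathlib

open MeasureTheory

/-- Eulerian numbers (number of permutations of `n` with `k` descents). -/
def Eul : ℕ → ℕ → ℕ
  | 0, 0 => 1
  | 0, _ + 1 => 0
  | n + 1, 0 => Eul n 0
  | n + 1, k + 1 => (n - k) * Eul n k + (k + 2) * Eul n (k + 1)

open Finset intervalIntegral

open Finset

/-- `Sz n k = n! * vol{u ∈ [0,1]^n : ∑ u ≤ k}` (explicit formula). -/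
def Sz (n k : ℕ) : ℤ :=
  ∑ j ∈ Finset.range (k + 1), (-1) ^ j * (n.choose j : ℤ) * ((k : ℤ) - j) ^ n

/-- `Tz n k = Sz n (k+1) - Sz n k` (explicit formula). -/
def Tz (n k : ℕ) : ℤ :=
  ∑ j ∈ Finset.range (k + 2), (-1) ^ j * ((n + 1).choose j : ℤ) * ((k : ℤ) + 1 - j) ^ n

lemma Tz_eq (n k : ℕ) : Tz n k = Sz n (k + 1) - Sz n k := by
  rw [eq_sub_iff_add_eq]
  unfold Tz Sz
  rw [Finset.sum_range_succ' (fun j => ((-1 : ℤ)) ^ j * ((n + 1).choose j : ℤ) * ((k : ℤ) + 1 - j) ^ n) (k + 1),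
      Finset.sum_range_succ' (fun j => ((-1 : ℤ)) ^ j * ((n).choose j : ℤ) * (((k + 1 : ℕ) : ℤ) - j) ^ n) (k + 1)]
  rw [add_right_comm, ← Finset.sum_add_distrib]
  congr 1
  · apply Finset.sum_congr rfl
    intro i _
    have := Nat.choose_succ_succ n i
    push_cast [this]
    ring
  · simp [Nat.choose_zero_right]

lemma Tz_rec (n k : ℕ) :
    Tz (n + 1) (k + 1) = ((n : ℤ) - k) * Tz n k + ((k : ℤ) + 2) * Tz n (k + 1) := by
  set A : ℤ := ∑ j ∈ Finset.range (k + 3), (-1) ^ j * ((n + 1).choose j : ℤ) * ((k : ℤ) + 2 - j) ^ (n + 1) with hA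
  set B : ℤ := ∑ j ∈ Finset.range (k + 2), (-1) ^ j * ((n + 1).choose j : ℤ) * ((k : ℤ) + 1 - j) ^ (n + 1) with hB
  have step1 : Tz (n + 1) (k + 1) = A - B := by
    rw [eq_sub_iff_add_eq]
    unfold Tz
    rw [hA, Finset.sum_range_succ' (fun j => ((-1 : ℤ)) ^ j * ((n + 1 + 1).choose j : ℤ) * (((k + 1 : ℕ) : ℤ) + 1 - j) ^ (n + 1)) (k + 2),
        Finset.sum_range_succ' (fun j => ((-1 : ℤ)) ^ j * ((n + 1).choose j : ℤ) * ((k : ℤ) + 2 - j) ^ (n + 1)) (k + 2)]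
    rw [add_right_comm, ← Finset.sum_add_distrib]
    congr 1
    · apply Finset.sum_congr rfl
      intro i _
      have h5 := Nat.choose_succ_succ (n + 1) i
      push_cast [h5]
      ring
  have step2 : A = ((k : ℤ) + 2) * Tz n (k + 1) + ((n : ℤ) + 1) * Sz n (k + 1) := by
    have expand : A = ((k : ℤ) + 2) * Tz n (k + 1)
        + ∑ j ∈ Finset.range (k + 3), (-1) ^ (j + 1) * j * ((n + 1).choose j : ℤ) * ((k : ℤ) + 2 - j) ^ n := by
      unfold Tz
      rw [hA, Finset.mul_sum, ← Finset.sum_add_distrib]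
      apply Finset.sum_congr rfl
      intro j _
      push_cast
      ring
    rw [expand]
    congr 1
    rw [Finset.sum_range_succ' (fun j => ((-1 : ℤ)) ^ (j + 1) * j * ((n + 1).choose j : ℤ) * ((k : ℤ) + 2 - j) ^ n) (k + 2)]
    unfold Sz
    rw [Finset.mul_sum]
    simp only [Nat.cast_zero, mul_zero, zero_mul, add_zero]
    apply Finset.sum_congr rfl
    intro i _
    have h := Nat.add_one_mul_choose_eq n i
    have h' : ((n + 1) * n.choose i : ℤ) = ((n + 1).choose (i + 1) : ℤ) * (i + 1) := by
      exact_mod_cast congrArg (Nat.cast : ℕ → ℤ) h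
    push_cast at h' ⊢
    linear_combination -((-1 : ℤ)) ^ i * ((k : ℤ) + 1 - (i : ℤ)) ^ n * h'
  have step3 : B = ((k : ℤ) + 1) * Tz n k + ((n : ℤ) + 1) * Sz n k := by
    have expand : B = ((k : ℤ) + 1) * Tz n k
        + ∑ j ∈ Finset.range (k + 2), (-1) ^ (j + 1) * j * ((n + 1).choose j : ℤ) * ((k : ℤ) + 1 - j) ^ n := by
      unfold Tz
      rw [hB, Finset.mul_sum, ← Finset.sum_add_distrib]
      apply Finset.sum_congr rfl
      intro j _
      push_cast
      ring
    rw [expand]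
    congr 1
    rw [Finset.sum_range_succ' (fun j => ((-1 : ℤ)) ^ (j + 1) * j * ((n + 1).choose j : ℤ) * ((k : ℤ) + 1 - j) ^ n) (k + 1)]
    unfold Sz
    rw [Finset.mul_sum]
    simp only [Nat.cast_zero, mul_zero, zero_mul, add_zero]
    apply Finset.sum_congr rfl
    intro i _
    have h := Nat.add_one_mul_choose_eq n i
    have h' : ((n + 1) * n.choose i : ℤ) = ((n + 1).choose (i + 1) : ℤ) * (i + 1) := by
      exact_mod_cast congrArg (Nat.cast : ℕ → ℤ) h
    push_cast at h' ⊢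
    linear_combination -((-1 : ℤ)) ^ i * ((k : ℤ) - (i : ℤ)) ^ n * h'
  have hT := Tz_eq n k
  rw [step1, step2, step3]
  rw [hT]
  ring

lemma Tz_one_vanish (k : ℕ) (hk : 1 ≤ k) : Tz 1 k = 0 := by
  unfold Tz
  have hsub : Finset.range 3 ⊆ Finset.range (k + 2) := by
    apply Finset.range_subset_range.2; omega
  rw [← Finset.sum_subset hsub (fun j _ hj => by
    simp only [Finset.mem_range, not_lt] at hj
    have : Nat.choose 2 j = 0 := Nat.choose_eq_zero_of_lt (by omega)
    simp [this])]
  simp [Finset.sum_range_succ]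
  ring

lemma Tz_vanish : ∀ n k : ℕ, 1 ≤ n → n ≤ k → Tz n k = 0 := by
  intro n
  induction n with
  | zero => intro k h; omega
  | succ m ih =>
    intro k h1 h2
    rcases Nat.eq_zero_or_pos m with hm | hm
    · subst hm
      exact Tz_one_vanish k (by omega)
    · obtain ⟨k', rfl⟩ : ∃ k', k = k' + 1 := ⟨k - 1, by omega⟩
      rw [Tz_rec, ih k' hm (by omega), ih (k' + 1) hm (by omega)]
      ring

lemma Eul_col_zero : ∀ n : ℕ, Eul n 0 = 1 := by
  intro n
  induction n with
  | zero => rfl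
  | succ m ih => rw [Eul, ih]

lemma Eul_vanish : ∀ n k : ℕ, 1 ≤ n → n ≤ k → Eul n k = 0 := by
  intro n
  induction n with
  | zero => intro k h; omega
  | succ m ih =>
    intro k h1 h2
    obtain ⟨k', rfl⟩ : ∃ k', k = k' + 1 := ⟨k - 1, by omega⟩
    rw [Eul]
    rcases Nat.eq_zero_or_pos m with hm | hm
    · subst hm
      simp [show Eul 0 (k' + 1) = 0 from rfl]
    · rw [ih (k' + 1) hm (by omega)]
      have : m - k' = 0 := by omega
      simp [this]

lemma Tz_eq_Eul : ∀ n k : ℕ, 1 ≤ n → k ≤ n - 1 → Tz n k = (Eul n k : ℤ) := by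
  intro n
  induction n with
  | zero => intro k h; omega
  | succ m ih =>
    intro k h1 hk
    rcases Nat.eq_zero_or_pos k with rfl | hkpos
    · -- Tz m+1 0 = 1 = Eul (m+1) 0
      rw [Eul_col_zero]
      unfold Tz
      rw [Finset.sum_range_succ, Finset.sum_range_succ]
      simp
    · obtain ⟨k', rfl⟩ : ∃ k', k = k' + 1 := ⟨k - 1, by omega⟩
      have hm : 1 ≤ m := by omega
      have hk' : k' ≤ m - 1 := by omega
      rw [Tz_rec, Eul, ih k' hm hk']
      have hcast : ((m : ℤ) - k') = ((m - k' : ℕ) : ℤ) := by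
        have : k' ≤ m := by omega
        omega
      rcases Nat.lt_or_ge (k' + 1) m with h | h
      · rw [ih (k' + 1) hm (by omega)]
        push_cast [hcast]
        ring
      · -- k' + 1 ≥ m; combined with k'+1 ≤ m gives k' + 1 = m
        have hkm : k' + 1 = m := by omega
        rw [Tz_vanish m (k' + 1) hm (by omega), Eul_vanish m (k' + 1) hm (by omega)]
        push_cast [hcast]
        ring

open MeasureTheory Finset intervalIntegral

lemma continuous_maxpow (n : ℕ) : Continuous fun s : ℝ => max s 0 ^ n :=
  (continuous_id.max continuous_const).pow n

lemma hasDerivAt_maxpow (n : ℕ) (hn : 1 ≤ n) (r : ℝ) :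
    HasDerivAt (fun y : ℝ => max y 0 ^ (n + 1)) (((n : ℝ) + 1) * max r 0 ^ n) r := by
  rcases lt_trichotomy r 0 with hr | rfl | hr
  · have h0 : (fun y : ℝ => max y 0 ^ (n + 1)) =ᶠ[nhds r] fun _ => (0 : ℝ) := by
      filter_upwards [Iio_mem_nhds hr] with y hy
      simp [max_eq_right (le_of_lt (Set.mem_Iio.mp hy))]
    have : ((n : ℝ) + 1) * max r 0 ^ n = 0 := by
      rw [max_eq_right hr.le, zero_pow (by omega : n ≠ 0), mul_zero]
    rw [this]
    exact (hasDerivAt_const r 0).congr_of_eventuallyEq h0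
  · have : ((n : ℝ) + 1) * max (0 : ℝ) 0 ^ n = 0 := by
      rw [max_self, zero_pow (by omega : n ≠ 0), mul_zero]
    rw [this, hasDerivAt_iff_tendsto_slope]
    have hb : ∀ y : ℝ, y ≠ 0 → ‖slope (fun y : ℝ => max y 0 ^ (n + 1)) 0 y‖ ≤ ‖y‖ ^ n := by
      intro y hy
      rw [slope_def_field]
      rcases le_or_gt y 0 with h | h
      · rw [max_eq_right h, zero_pow (by omega : n + 1 ≠ 0)]
        simp only [max_self, zero_pow (by omega : n + 1 ≠ 0), sub_zero, zero_div, norm_zero]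
        positivity
      · rw [max_eq_left h.le, max_self, zero_pow (by omega : n + 1 ≠ 0), sub_zero, sub_zero,
          pow_succ, mul_div_assoc, div_self hy, mul_one, norm_pow]
    have hg : Filter.Tendsto (fun y : ℝ => ‖y‖ ^ n) (nhdsWithin 0 {(0 : ℝ)}ᶜ) (nhds 0) := by
      have hcont : Filter.Tendsto (fun y : ℝ => ‖y‖ ^ n) (nhds 0) (nhds (‖(0:ℝ)‖ ^ n)) :=
        (continuous_norm.pow n).tendsto (0 : ℝ)
      rw [norm_zero, zero_pow (by omega : n ≠ 0)] at hcont
      exact hcont.mono_left nhdsWithin_le_nhds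
    refine squeeze_zero_norm' ?_ hg
    filter_upwards [self_mem_nhdsWithin] with y hy
    exact hb y hy
  · have h0 : (fun y : ℝ => max y 0 ^ (n + 1)) =ᶠ[nhds r] fun y => y ^ (n + 1) := by
      filter_upwards [Ioi_mem_nhds hr] with y hy
      simp [max_eq_left (le_of_lt (Set.mem_Ioi.mp hy))]
    have := hasDerivAt_pow (n + 1) r
    rw [max_eq_left hr.le]
    simp only [Nat.add_sub_cancel] at this
    have h2 : ((n : ℝ) + 1) * r ^ n = (↑(n + 1) : ℝ) * r ^ n := by push_cast; ring
    rw [h2]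
    exact this.congr_of_eventuallyEq h0

lemma integral_maxpow (n : ℕ) (hn : 1 ≤ n) (y : ℝ) :
    ∫ t in (0 : ℝ)..1, max (y - t) 0 ^ n
      = (max y 0 ^ (n + 1) - max (y - 1) 0 ^ (n + 1)) / ((n : ℝ) + 1) := by
  have h1 : ∫ t in (0 : ℝ)..1, max (y - t) 0 ^ n = ∫ s in (y - 1)..(y - 0), max s 0 ^ n := by
    exact intervalIntegral.integral_comp_sub_left (a := 0) (b := 1) (fun s => max s 0 ^ n) y
  rw [h1]
  have hd : ∀ s ∈ Set.uIcc (y - 1) (y - 0),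
      HasDerivAt (fun u : ℝ => max u 0 ^ (n + 1) / ((n : ℝ) + 1)) (max s 0 ^ n) s := by
    intro s _
    have := (hasDerivAt_maxpow n hn s).div_const ((n : ℝ) + 1)
    have hne : ((n : ℝ) + 1) ≠ 0 := by positivity
    rwa [mul_div_cancel_left₀ _ hne] at this
  rw [intervalIntegral.integral_eq_sub_of_hasDerivAt hd
    ((continuous_maxpow n).intervalIntegrable _ _)]
  rw [sub_zero]
  ring

/-- `G n x` is the Irwin–Hall CDF: the volume of `{u ∈ [0,1]^n : ∑ u ≤ x}`. -/
noncomputable def G (n : ℕ) (x : ℝ) : ℝ :=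
  (∑ j ∈ Finset.range (n + 1), (-1 : ℝ) ^ j * (n.choose j : ℝ) * max (x - j) 0 ^ n)
    / (n.factorial : ℝ)

lemma continuous_G (n : ℕ) : Continuous (G n) := by
  apply Continuous.div_const
  apply continuous_finset_sum
  intro j _
  exact continuous_const.mul (((continuous_id.sub continuous_const).max continuous_const).pow n)


lemma sum_id (n : ℕ) (x : ℝ) :
    ∑ j ∈ Finset.range (n + 2), (-1 : ℝ) ^ j * ((n + 1).choose j : ℝ) * max (x - j) 0 ^ (n + 1)
      = ∑ j ∈ Finset.range (n + 1), (-1 : ℝ) ^ j * (n.choose j : ℝ) *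
          (max (x - j) 0 ^ (n + 1) - max (x - j - 1) 0 ^ (n + 1)) := by
  have hR : ∀ j : ℕ, (-1 : ℝ) ^ j * (n.choose j : ℝ) *
        (max (x - j) 0 ^ (n + 1) - max (x - j - 1) 0 ^ (n + 1))
      = (-1 : ℝ) ^ j * (n.choose j : ℝ) * max (x - (j : ℕ)) 0 ^ (n + 1)
        - (-1 : ℝ) ^ j * (n.choose j : ℝ) * max (x - ((j + 1 : ℕ) : ℝ)) 0 ^ (n + 1) := by
    intro j
    have : x - (j : ℝ) - 1 = x - ((j + 1 : ℕ) : ℝ) := by push_cast; ring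
    rw [this]; ring
  simp_rw [hR]
  rw [Finset.sum_sub_distrib]
  rw [Finset.sum_range_succ' (fun j => (-1 : ℝ) ^ j * ((n + 1).choose j : ℝ) * max (x - j) 0 ^ (n + 1)) (n + 1)]
  rw [Finset.sum_range_succ' (fun j => (-1 : ℝ) ^ j * (n.choose j : ℝ) * max (x - j) 0 ^ (n + 1)) n]
  have hext : ∑ i ∈ Finset.range n, (-1 : ℝ) ^ (i + 1) * (n.choose (i + 1) : ℝ) * max (x - (i + 1 : ℕ)) 0 ^ (n + 1)
      = ∑ i ∈ Finset.range (n + 1), (-1 : ℝ) ^ (i + 1) * (n.choose (i + 1) : ℝ) * max (x - (i + 1 : ℕ)) 0 ^ (n + 1) := by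
    rw [Finset.sum_range_succ]
    simp [Nat.choose_succ_self]
  rw [hext]
  rw [eq_sub_iff_add_eq, add_right_comm, ← Finset.sum_add_distrib]
  congr 1
  apply Finset.sum_congr rfl
  intro i _
  have := Nat.choose_succ_succ n i
  push_cast [this]
  ring
  · simp

lemma G_rec (n : ℕ) (hn : 1 ≤ n) (x : ℝ) :
    G (n + 1) x = ∫ t in (0 : ℝ)..1, G n (x - t) := by
  have hint : ∀ j : ℕ, IntervalIntegrable (fun t : ℝ => max (x - t - j) 0 ^ n)
      MeasureTheory.volume 0 1 := by
    intro j
    exact (((continuous_const.sub continuous_id).sub continuous_const).max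
      continuous_const).pow n |>.intervalIntegrable 0 1
  have h1 : ∫ t in (0 : ℝ)..1, G n (x - t)
      = (∑ j ∈ Finset.range (n + 1), (-1 : ℝ) ^ j * (n.choose j : ℝ) *
          ((max (x - j) 0 ^ (n + 1) - max (x - j - 1) 0 ^ (n + 1)) / ((n : ℝ) + 1)))
        / (n.factorial : ℝ) := by
    unfold G
    rw [intervalIntegral.integral_div]
    congr 1
    rw [intervalIntegral.integral_finset_sum]
    · apply Finset.sum_congr rfl
      intro j _
      rw [intervalIntegral.integral_const_mul]
      congr 1
      have : ∀ t : ℝ, x - t - j = (x - j) - t := by intro t; ring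
      simp_rw [this]
      exact integral_maxpow n hn (x - j)
    · intro j _
      exact (hint j).const_mul _
  rw [h1]
  unfold G
  have h2 : ∑ j ∈ Finset.range (n + 1), (-1 : ℝ) ^ j * (n.choose j : ℝ) *
        ((max (x - j) 0 ^ (n + 1) - max (x - j - 1) 0 ^ (n + 1)) / ((n : ℝ) + 1))
      = (∑ j ∈ Finset.range (n + 1), (-1 : ℝ) ^ j * (n.choose j : ℝ) *
          (max (x - j) 0 ^ (n + 1) - max (x - j - 1) 0 ^ (n + 1))) / ((n : ℝ) + 1) := by
    rw [Finset.sum_div]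
    exact Finset.sum_congr rfl (fun j _ => by rw [mul_div_assoc])
  rw [h2, ← sum_id n x, div_div]
  congr 1
  rw [Nat.factorial_succ]
  push_cast
  ring

lemma G_one (x : ℝ) : G 1 x = max x 0 - max (x - 1) 0 := by
  unfold G
  rw [Finset.sum_range_succ, Finset.sum_range_succ, Finset.sum_range_zero]
  simp [Nat.factorial]
  ring

lemma G_one_nonneg (x : ℝ) : 0 ≤ G 1 x := by
  rw [G_one]
  rcases le_total x 0 with h | h
  · rw [max_eq_right h, max_eq_right (by linarith : x - 1 ≤ 0)]; linarith
  · rcases le_total x 1 with h1 | h1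
    · rw [max_eq_left h, max_eq_right (by linarith)]; linarith
    · rw [max_eq_left h, max_eq_left (by linarith)]; linarith

lemma G_nonneg (n : ℕ) (hn : 1 ≤ n) (x : ℝ) : 0 ≤ G n x := by
  induction n generalizing x with
  | zero => omega
  | succ m ih =>
    rcases Nat.eq_zero_or_pos m with rfl | hm
    · exact G_one_nonneg x
    · rw [G_rec m hm x]
      apply intervalIntegral.integral_nonneg (by norm_num)
      intro t _
      exact ih hm (x - t)

lemma G_int (n k : ℕ) (hn : 1 ≤ n) :
    (n.factorial : ℝ) * G n (k : ℝ) = ((Sz n k : ℤ) : ℝ) := by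
  have hA : (n.factorial : ℝ) * G n (k : ℝ)
      = ∑ j ∈ Finset.range (n + 1), (-1 : ℝ) ^ j * (n.choose j : ℝ) * max ((k : ℝ) - j) 0 ^ n := by
    unfold G
    rw [mul_div_cancel₀]
    positivity
  rw [hA]
  have e1 : ∑ j ∈ Finset.range (n + 1), (-1 : ℝ) ^ j * (n.choose j : ℝ) * max ((k : ℝ) - j) 0 ^ n
      = ∑ j ∈ Finset.range (n + k + 1), (-1 : ℝ) ^ j * (n.choose j : ℝ) * max ((k : ℝ) - j) 0 ^ n := by
    apply Finset.sum_subset (Finset.range_subset_range.2 (by omega))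
    intro j _ hj
    simp only [Finset.mem_range, not_lt] at hj
    rw [Nat.choose_eq_zero_of_lt (by omega)]
    simp
  have e2 : ((Sz n k : ℤ) : ℝ)
      = ∑ j ∈ Finset.range (k + 1), (-1 : ℝ) ^ j * (n.choose j : ℝ) * max ((k : ℝ) - j) 0 ^ n := by
    unfold Sz
    push_cast
    apply Finset.sum_congr rfl
    intro j hj
    simp only [Finset.mem_range] at hj
    rw [max_eq_left]
    have : (j : ℝ) ≤ (k : ℝ) := by exact_mod_cast Nat.le_of_lt_succ hj
    linarith
  have e3 : ∑ j ∈ Finset.range (k + 1), (-1 : ℝ) ^ j * (n.choose j : ℝ) * max ((k : ℝ) - j) 0 ^ n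
      = ∑ j ∈ Finset.range (n + k + 1), (-1 : ℝ) ^ j * (n.choose j : ℝ) * max ((k : ℝ) - j) 0 ^ n := by
    apply Finset.sum_subset (Finset.range_subset_range.2 (by omega))
    intro j _ hj
    simp only [Finset.mem_range, not_lt] at hj
    have : max ((k : ℝ) - j) 0 = 0 := by
      apply max_eq_right
      have : (k : ℝ) ≤ (j : ℝ) := by exact_mod_cast (by omega : k ≤ j)
      linarith
    rw [this, zero_pow (by omega : n ≠ 0), mul_zero]
  rw [e1, e2, e3]

def cubeSum (n : ℕ) (x : ℝ) : Set (Fin n → ℝ) :=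
  {u | (∀ i, u i ∈ Set.Icc (0 : ℝ) 1) ∧ ∑ i, u i ≤ x}

lemma measurable_sum_coords (n : ℕ) : Measurable fun u : Fin n → ℝ => ∑ i, u i :=
  Finset.univ.measurable_sum (fun i _ => measurable_pi_apply i)

lemma measurableSet_cubeSum (n : ℕ) (x : ℝ) : MeasurableSet (cubeSum n x) := by
  have h1 : MeasurableSet {u : Fin n → ℝ | ∀ i, u i ∈ Set.Icc (0 : ℝ) 1} := by
    rw [Set.setOf_forall]
    exact MeasurableSet.iInter fun i => (measurable_pi_apply i) measurableSet_Icc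
  have h2 : MeasurableSet {u : Fin n → ℝ | ∑ i, u i ≤ x} :=
    measurableSet_le (measurable_sum_coords n) measurable_const
  exact h1.inter h2

lemma vol_cubeSum : ∀ n : ℕ, 1 ≤ n → ∀ x : ℝ,
    volume (cubeSum n x) = ENNReal.ofReal (G n x) := by
  intro n
  induction n with
  | zero => omega
  | succ m ih =>
    intro _ x
    rcases Nat.eq_zero_or_pos m with rfl | hm
    · -- base case n = 1
      have vp := (volume_preserving_funUnique (Fin 1) ℝ).symm
      show volume (cubeSum 1 x) = ENNReal.ofReal (G 1 x)
      erw [← vp.measure_preimage (measurableSet_cubeSum 1 x).nullMeasurableSet]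
      have hset : (MeasurableEquiv.funUnique (Fin 1) ℝ).symm ⁻¹' cubeSum 1 x
          = Set.Icc 0 (min 1 x) := by
        ext t
        simp only [cubeSum, Set.mem_preimage, Set.mem_setOf_eq, MeasurableEquiv.funUnique_symm_apply]
        constructor
        · rintro ⟨h1, h2⟩
          have := h1 0
          simp only [Set.mem_Icc] at this ⊢
          rw [Fin.sum_univ_one] at h2
          exact ⟨this.1, le_min this.2 h2⟩
        · intro h
          simp only [Set.mem_Icc] at h
          refine ⟨fun i => ⟨h.1, le_trans h.2 (min_le_left _ _)⟩, ?_⟩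
          rw [Fin.sum_univ_one]
          exact le_trans h.2 (min_le_right _ _)
      rw [hset, Real.volume_Icc, G_one, sub_zero]
      rcases le_total x 0 with h | h
      · rw [min_eq_right (le_trans h zero_le_one), max_eq_right h,
          max_eq_right (by linarith : x - 1 ≤ 0), sub_zero]
        rw [ENNReal.ofReal_eq_zero.2 h, ENNReal.ofReal_zero]
      · rcases le_total x 1 with h1 | h1
        · rw [min_eq_right h1, max_eq_left h, max_eq_right (by linarith : x - 1 ≤ 0)]
          congr 1; ring
        · rw [min_eq_left h1, max_eq_left (by linarith : (0:ℝ) ≤ x),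
            max_eq_left (by linarith : (0:ℝ) ≤ x - 1)]
          congr 1; ring
    · -- inductive step
      have vp := (measurePreserving_piFinSuccAbove (fun _ : Fin (m + 1) => (volume : Measure ℝ)) 0).symm
      rw [volume_pi, ← vp.measure_preimage (measurableSet_cubeSum (m + 1) x).nullMeasurableSet]
      set e := MeasurableEquiv.piFinSuccAbove (fun _ : Fin (m + 1) => ℝ) 0 with he
      have hset : e.symm ⁻¹' cubeSum (m + 1) x
          = {p : ℝ × (Fin m → ℝ) | p.1 ∈ Set.Icc (0:ℝ) 1 ∧
              ((∀ j, p.2 j ∈ Set.Icc (0:ℝ) 1) ∧ ∑ j, p.2 j ≤ x - p.1)} := by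
        ext ⟨t, y⟩
        simp only [cubeSum, Set.mem_preimage, Set.mem_setOf_eq, he,
          MeasurableEquiv.piFinSuccAbove_symm_apply, Fin.insertNthEquiv, Equiv.coe_fn_mk,
          Fin.insertNth_zero]
        rw [Fin.forall_fin_succ, Fin.sum_univ_succ]
        simp only [Fin.cons_zero, Fin.cons_succ, Fin.zero_succAbove, cast_eq]
        constructor
        · rintro ⟨⟨h0, hs⟩, hsum⟩
          exact ⟨h0, hs, by linarith⟩
        · rintro ⟨h0, hs, hsum⟩
          exact ⟨⟨h0, hs⟩, by linarith⟩
      rw [hset]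
      have hT : MeasurableSet {p : ℝ × (Fin m → ℝ) | p.1 ∈ Set.Icc (0:ℝ) 1 ∧
          ((∀ j, p.2 j ∈ Set.Icc (0:ℝ) 1) ∧ ∑ j, p.2 j ≤ x - p.1)} := by
        rw [← hset]
        exact e.symm.measurable (measurableSet_cubeSum (m + 1) x)
      rw [Measure.prod_apply hT]
      have hslice : (fun t : ℝ => (Measure.pi fun _ : Fin m => (volume : Measure ℝ))
            (Prod.mk t ⁻¹' {p : ℝ × (Fin m → ℝ) | p.1 ∈ Set.Icc (0:ℝ) 1 ∧
              ((∀ j, p.2 j ∈ Set.Icc (0:ℝ) 1) ∧ ∑ j, p.2 j ≤ x - p.1)}))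
          = fun t : ℝ => (Set.Icc (0:ℝ) 1).indicator
              (fun t => ENNReal.ofReal (G m (x - t))) t := by
        funext t
        by_cases ht : t ∈ Set.Icc (0:ℝ) 1
        · rw [Set.indicator_of_mem ht]
          have : Prod.mk t ⁻¹' {p : ℝ × (Fin m → ℝ) | p.1 ∈ Set.Icc (0:ℝ) 1 ∧
              ((∀ j, p.2 j ∈ Set.Icc (0:ℝ) 1) ∧ ∑ j, p.2 j ≤ x - p.1)} = cubeSum m (x - t) := by
            ext y
            simp only [Set.mem_preimage, Set.mem_setOf_eq, cubeSum, ht, true_and]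
          rw [this, ← volume_pi, ih hm (x - t)]
        · have : Prod.mk t ⁻¹' {p : ℝ × (Fin m → ℝ) | p.1 ∈ Set.Icc (0:ℝ) 1 ∧
              ((∀ j, p.2 j ∈ Set.Icc (0:ℝ) 1) ∧ ∑ j, p.2 j ≤ x - p.1)} = ∅ := by
            ext y
            simp only [Set.mem_preimage, Set.mem_setOf_eq, Set.mem_empty_iff_false, iff_false]
            intro h
            exact ht h.1
          rw [this, Set.indicator_of_notMem ht, measure_empty]
      rw [hslice, lintegral_indicator measurableSet_Icc]
      have hInt : MeasureTheory.IntegrableOn (fun t : ℝ => G m (x - t)) (Set.Icc 0 1) := by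
        exact ((continuous_G m).comp (continuous_const.sub continuous_id)).integrableOn_Icc
      rw [← MeasureTheory.ofReal_integral_eq_lintegral_ofReal hInt
        (Filter.Eventually.of_forall (fun t => G_nonneg m hm (x - t)))]
      congr 1
      rw [MeasureTheory.integral_Icc_eq_integral_Ioc,
        ← intervalIntegral.integral_of_le (zero_le_one)]
      exact (G_rec m hm x).symm

lemma hyperplane_null (n : ℕ) (hn : 1 ≤ n) (c : ℝ) :
    volume {u : Fin n → ℝ | ∑ i, u i = c} = 0 := by
  classical
  set L : (Fin n → ℝ) →ₗ[ℝ] ℝ := ∑ i, LinearMap.proj i with hL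
  have hLu : ∀ u : Fin n → ℝ, L u = ∑ i, u i := by
    intro u
    rw [hL]
    simp [LinearMap.proj_apply]
  have hker : LinearMap.ker L ≠ ⊤ := by
    intro h
    rw [LinearMap.ker_eq_top] at h
    have h1 : L (fun _ => 1) = (n : ℝ) := by rw [hLu]; simp
    rw [h] at h1
    simp only [LinearMap.zero_apply] at h1
    have : (n : ℝ) ≠ 0 := by positivity
    exact this h1.symm
  have hset : {u : Fin n → ℝ | ∑ i, u i = c}
      = (fun u : Fin n → ℝ => u + fun _ => -(c / n)) ⁻¹' (LinearMap.ker L : Set (Fin n → ℝ)) := by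
    ext u
    simp only [Set.mem_setOf_eq, Set.mem_preimage, SetLike.mem_coe, LinearMap.mem_ker, hLu]
    have hne : (n : ℝ) ≠ 0 := by positivity
    have key : (n : ℕ) • (-(c / (n : ℝ))) = -c := by
      rw [nsmul_eq_mul]
      field_simp
    constructor
    · intro h
      simp only [Pi.add_apply]
      rw [Finset.sum_add_distrib, h, Finset.sum_const, Finset.card_univ, Fintype.card_fin, key]
      ring
    · intro h
      simp only [Pi.add_apply] at h
      rw [Finset.sum_add_distrib, Finset.sum_const, Finset.card_univ, Fintype.card_fin, key] at h
      linarith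
  rw [hset, measure_preimage_add_right]
  exact MeasureTheory.Measure.addHaar_submodule volume (LinearMap.ker L) hker

/-- Tanny's representation: `E(n,k)/n!` is the probability that the integer part of a sum
of `n` i.i.d. uniform random variables on `[0,1]` equals `k`. -/
theorem tanny_representation (n k : ℕ) (hn : 1 ≤ n) (hk : k ≤ n - 1) :
    volume {u : Fin n → ℝ | (∀ i, u i ∈ Set.Icc (0 : ℝ) 1) ∧ ⌊∑ i, u i⌋ = (k : ℤ)}
      = ENNReal.ofReal ((Eul n k : ℝ) / n.factorial) := by
  classical
  set T : Set (Fin n → ℝ) :=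
    {u | (∀ i, u i ∈ Set.Icc (0 : ℝ) 1) ∧ ⌊∑ i, u i⌋ = (k : ℤ)} with hT
  set B : Set (Fin n → ℝ) :=
    {u | (∀ i, u i ∈ Set.Icc (0 : ℝ) 1) ∧ (k : ℝ) ≤ ∑ i, u i ∧ ∑ i, u i ≤ (k : ℝ) + 1} with hB
  have hBmeas : MeasurableSet B := by
    have h1 : MeasurableSet {u : Fin n → ℝ | ∀ i, u i ∈ Set.Icc (0 : ℝ) 1} := by
      rw [Set.setOf_forall]
      exact MeasurableSet.iInter fun i => (measurable_pi_apply i) measurableSet_Icc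
    have h2 : MeasurableSet {u : Fin n → ℝ | (k : ℝ) ≤ ∑ i, u i} :=
      measurableSet_le measurable_const (measurable_sum_coords n)
    have h3 : MeasurableSet {u : Fin n → ℝ | ∑ i, u i ≤ (k : ℝ) + 1} :=
      measurableSet_le (measurable_sum_coords n) measurable_const
    exact h1.inter (h2.inter h3)
  -- union decomposition
  have hunion : cubeSum n ((k : ℝ) + 1) = cubeSum n (k : ℝ) ∪ B := by
    ext u
    simp only [cubeSum, hB, Set.mem_setOf_eq, Set.mem_union]
    constructor
    · rintro ⟨hc, hs⟩
      rcases le_total (∑ i, u i) (k : ℝ) with h | h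
      · exact Or.inl ⟨hc, h⟩
      · exact Or.inr ⟨hc, h, hs⟩
    · rintro (⟨hc, hs⟩ | ⟨hc, _, hs⟩)
      · exact ⟨hc, by linarith⟩
      · exact ⟨hc, hs⟩
  have hinter : volume (cubeSum n (k : ℝ) ∩ B) = 0 := by
    apply measure_mono_null _ (hyperplane_null n hn (k : ℝ))
    rintro u ⟨⟨_, h1⟩, _, h2, _⟩
    exact le_antisymm h1 h2
  have hadd : volume (cubeSum n ((k : ℝ) + 1)) = volume (cubeSum n (k : ℝ)) + volume B := by
    rw [hunion, ← measure_union_add_inter _ hBmeas, hinter, add_zero]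
  -- T and B agree up to null sets
  have hTB : volume T = volume B := by
    apply le_antisymm
    · apply measure_mono
      rintro u ⟨hc, hf⟩
      have := (Int.floor_eq_iff (z := (k : ℤ))).1 hf
      push_cast at this
      exact ⟨hc, this.1, this.2.le⟩
    · have hsub : B ⊆ T ∪ {u : Fin n → ℝ | ∑ i, u i = (k : ℝ) + 1} := by
        rintro u ⟨hc, h1, h2⟩
        rcases lt_or_eq_of_le h2 with h | h
        · left
          refine ⟨hc, ?_⟩
          rw [Int.floor_eq_iff]
          push_cast
          exact ⟨h1, h⟩
        · right
          exact h
      calc volume B ≤ volume (T ∪ {u : Fin n → ℝ | ∑ i, u i = (k : ℝ) + 1}) := measure_mono hsub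
        _ ≤ volume T + volume {u : Fin n → ℝ | ∑ i, u i = (k : ℝ) + 1} := measure_union_le _ _
        _ = volume T := by rw [hyperplane_null n hn ((k : ℝ) + 1), add_zero]
  -- G values
  have hG1 : volume (cubeSum n (k : ℝ)) = ENNReal.ofReal (G n (k : ℝ)) := vol_cubeSum n hn _
  have hG2 : volume (cubeSum n ((k : ℝ) + 1)) = ENNReal.ofReal (G n ((k : ℝ) + 1)) :=
    vol_cubeSum n hn _
  have hfac : (0 : ℝ) < (n.factorial : ℝ) := by positivity
  have hGdiff : G n ((k : ℝ) + 1) = G n (k : ℝ) + (Eul n k : ℝ) / n.factorial := by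
    have e1 := G_int n k hn
    have e2 := G_int n (k + 1) hn
    have e3 : ((Sz n (k + 1) : ℤ) : ℝ) = ((Sz n k : ℤ) : ℝ) + ((Eul n k : ℕ) : ℝ) := by
      have := Tz_eq n k
      rw [Tz_eq_Eul n k hn hk] at this
      have h4 : (Sz n (k + 1) : ℤ) = Sz n k + (Eul n k : ℤ) := by omega
      exact_mod_cast congrArg (Int.cast : ℤ → ℝ) h4
    have hcast : (((k + 1 : ℕ) : ℝ)) = ((k : ℝ) + 1) := by push_cast; ring
    rw [hcast] at e2
    field_simp
    rw [mul_comm (G n _) _, mul_comm (G n _) _, e1, e2, e3]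
  rw [hTB]
  have h := hadd
  rw [hG1, hG2, hGdiff, ENNReal.ofReal_add (G_nonneg n hn _) (by positivity)] at h
  exact ((ENNReal.add_right_inj ENNReal.ofReal_ne_top).1 h).symm
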